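/- Fix a sequence (a_n)_{n≥0} of nonnegative reals and let (u_n(t))_{n≥0} solve the triangular ODE system u_0(t) = a_0, u_n(t) = a_n + √n ∫_0^t u_{n-1}(s) ds. Then u_n(t) = ∑_{k=0}^n (√(n!)/√((n-k)! k!)) · (a_{n-k}/√(k!)) · t^k, and consequently ∑_{n≥0} u_n(1)² ≥ C ∑_{n≥0} e^{√n} a_n², where C > 0 is an absolute constant. -/

import Mathlib

open MeasureTheory intervalIntegral

lemma aux_sum_sq {s : Finset ℕ} {f : ℕ → ℝ} (hf : ∀ i ∈ s, 0 ≤ f i) :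
    ∑ i ∈ s, (f i) ^ 2 ≤ (∑ i ∈ s, f i) ^ 2 := by
  calc ∑ i ∈ s, f i ^ 2 ≤ ∑ i ∈ s, f i * (∑ j ∈ s, f j) := by
        refine Finset.sum_le_sum fun i hi => ?_
        rw [sq]
        exact mul_le_mul_of_nonneg_left (Finset.single_le_sum hf hi) (hf i hi)
    _ = (∑ i ∈ s, f i) ^ 2 := by rw [← Finset.sum_mul, sq]

lemma aux_exp_le (x : ℝ) (_hx : 0 ≤ x) :
    Real.exp x ≤ 2 * ∑' k : ℕ, x ^ (2 * k) / ((2 * k).factorial : ℝ) := by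
  have hs : Summable fun n : ℕ => x ^ n / (n.factorial : ℝ) :=
    Real.summable_pow_div_factorial x
  have hs' : Summable fun n : ℕ => (-x) ^ n / (n.factorial : ℝ) :=
    Real.summable_pow_div_factorial (-x)
  set f : ℕ → ℝ := fun n => x ^ n / (n.factorial : ℝ) + (-x) ^ n / (n.factorial : ℝ) with hf
  have hsf : Summable f := hs.add hs'
  have he : Summable fun k : ℕ => f (2 * k) := by
    simpa [Function.comp_def] using hsf.comp_injective
      (i := fun k : ℕ => 2 * k) (fun a b h => Nat.eq_of_mul_eq_mul_left two_pos h)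
  have ho : Summable fun k : ℕ => f (2 * k + 1) := by
    simpa [Function.comp_def] using hsf.comp_injective
      (i := fun k : ℕ => 2 * k + 1) (fun a b h => Nat.eq_of_mul_eq_mul_left two_pos (Nat.succ_injective h))
  have hkey := tsum_even_add_odd he ho
  have hx1 : Real.exp x = ∑' n : ℕ, x ^ n / (n.factorial : ℝ) := by
    rw [Real.exp_eq_exp_ℝ, NormedSpace.exp_eq_tsum_div]
  have hx2 : Real.exp (-x) = ∑' n : ℕ, (-x) ^ n / (n.factorial : ℝ) := by
    rw [Real.exp_eq_exp_ℝ, NormedSpace.exp_eq_tsum_div]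
  have heven : (fun k : ℕ => f (2 * k)) = fun k : ℕ => 2 * (x ^ (2 * k) / ((2 * k).factorial : ℝ)) := by
    funext k
    simp only [hf]
    rw [Even.neg_pow (even_two_mul k)]
    ring
  have hodd : (fun k : ℕ => f (2 * k + 1)) = fun _ => (0 : ℝ) := by
    funext k
    simp only [hf]
    rw [Odd.neg_pow ⟨k, by ring⟩]
    ring
  have hsum : Real.exp x + Real.exp (-x)
      = 2 * ∑' k : ℕ, x ^ (2 * k) / ((2 * k).factorial : ℝ) := by
    rw [hx1, hx2, ← Summable.tsum_add hs hs', ← hkey, heven, hodd, tsum_zero, add_zero, tsum_mul_left]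
  have := (Real.exp_pos (-x)).le
  linarith

lemma aux_nat (m k : ℕ) :
    m ^ k * k.factorial ≤ (m + k).choose k * (2 * k).factorial := by
  have h2 : (m + k).choose k * k.factorial * m.factorial = (m + k).factorial := by
    have := Nat.choose_mul_factorial_mul_factorial (Nat.le_add_left k m)
    simpa [Nat.add_sub_cancel] using this
  have h1 : m ^ k * m.factorial ≤ (m + k).choose k * k.factorial * m.factorial := by
    rw [h2]
    calc m ^ k * m.factorial ≤ (m + 1) ^ k * m.factorial :=
          Nat.mul_le_mul_right _ (Nat.pow_le_pow_left (Nat.le_succ m) k)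
      _ = m.factorial * (m + 1) ^ k := Nat.mul_comm _ _
      _ ≤ (m + k).factorial := Nat.factorial_mul_pow_le_factorial
  have h1' : m ^ k ≤ (m + k).choose k * k.factorial :=
    Nat.le_of_mul_le_mul_right h1 m.factorial_pos
  have h3 : k.factorial * k.factorial ≤ (2 * k).factorial :=
    Nat.le_of_dvd (2 * k).factorial_pos
      (by simpa [two_mul] using Nat.factorial_mul_factorial_dvd_factorial_add k k)
  calc m ^ k * k.factorial ≤ (m + k).choose k * k.factorial * k.factorial :=
        Nat.mul_le_mul_right _ h1'
    _ = (m + k).choose k * (k.factorial * k.factorial) := by ring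
    _ ≤ (m + k).choose k * (2 * k).factorial := Nat.mul_le_mul_left _ h3

lemma aux_key (m : ℕ) :
    ENNReal.ofReal (Real.exp (Real.sqrt m) / 2) ≤
      ∑' k : ℕ, ENNReal.ofReal ((((m + k).choose k : ℕ) : ℝ) / (k.factorial : ℝ)) := by
  set x := Real.sqrt (m : ℝ) with hxdef
  have hx : 0 ≤ x := Real.sqrt_nonneg _
  have he : Summable fun k : ℕ => x ^ (2 * k) / ((2 * k).factorial : ℝ) := by
    simpa [Function.comp_def] using (Real.summable_pow_div_factorial x).comp_injective
      (i := fun k : ℕ => 2 * k) (fun a b h => Nat.eq_of_mul_eq_mul_left two_pos h)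
  have hterm : ∀ k : ℕ, x ^ (2 * k) / ((2 * k).factorial : ℝ)
      ≤ (((m + k).choose k : ℕ) : ℝ) / (k.factorial : ℝ) := by
    intro k
    have hxpow : x ^ (2 * k) = (m : ℝ) ^ k := by
      rw [pow_mul, hxdef, Real.sq_sqrt (Nat.cast_nonneg m)]
    rw [hxpow, div_le_div_iff₀ (by positivity) (by positivity)]
    exact_mod_cast aux_nat m k
  calc ENNReal.ofReal (Real.exp x / 2)
      ≤ ENNReal.ofReal (∑' k : ℕ, x ^ (2 * k) / ((2 * k).factorial : ℝ)) := by
        refine ENNReal.ofReal_le_ofReal ?_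
        have := aux_exp_le x hx
        linarith
    _ = ∑' k : ℕ, ENNReal.ofReal (x ^ (2 * k) / ((2 * k).factorial : ℝ)) :=
        ENNReal.ofReal_tsum_of_nonneg (fun k => by positivity) he
    _ ≤ ∑' k : ℕ, ENNReal.ofReal ((((m + k).choose k : ℕ) : ℝ) / (k.factorial : ℝ)) :=
        Summable.tsum_le_tsum (fun k => ENNReal.ofReal_le_ofReal (hterm k))
          ENNReal.summable ENNReal.summable

lemma aux_coef (n k : ℕ) (A y t : ℝ) (hA : 0 < A) :
    Real.sqrt ((n : ℝ) + 1) * (Real.sqrt (n.factorial : ℝ) / Real.sqrt (A * (k.factorial : ℝ)) *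
        (y / Real.sqrt (k.factorial : ℝ)) * (t ^ (k + 1) / ((k : ℝ) + 1))) =
    Real.sqrt ((n + 1).factorial : ℝ) / Real.sqrt (A * ((k + 1).factorial : ℝ)) *
        (y / Real.sqrt ((k + 1).factorial : ℝ)) * t ^ (k + 1) := by
  have hfn : (((n + 1).factorial : ℕ) : ℝ) = ((n : ℝ) + 1) * (n.factorial : ℝ) := by
    rw [Nat.factorial_succ]; push_cast; ring
  have hfk : (((k + 1).factorial : ℕ) : ℝ) = ((k : ℝ) + 1) * (k.factorial : ℝ) := by
    rw [Nat.factorial_succ]; push_cast; ring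
  rw [hfn, hfk]
  rw [Real.sqrt_mul (by positivity : (0:ℝ) ≤ (n : ℝ) + 1),
    show A * (((k : ℝ) + 1) * (k.factorial : ℝ)) = ((k : ℝ) + 1) * (A * (k.factorial : ℝ)) by ring,
    Real.sqrt_mul (by positivity : (0:ℝ) ≤ (k : ℝ) + 1),
    Real.sqrt_mul (by positivity : (0:ℝ) ≤ (k : ℝ) + 1)]
  set sk1 := Real.sqrt ((k : ℝ) + 1) with hsk1
  have hk1 : (k : ℝ) + 1 = sk1 * sk1 := (Real.mul_self_sqrt (by positivity)).symm
  have hsk1pos : 0 < sk1 := Real.sqrt_pos.mpr (by positivity)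
  have hskpos : 0 < Real.sqrt (k.factorial : ℝ) :=
    Real.sqrt_pos.mpr (by exact_mod_cast k.factorial_pos)
  have hsApos : 0 < Real.sqrt (A * (k.factorial : ℝ)) :=
    Real.sqrt_pos.mpr (by positivity)
  rw [hk1]
  field_simp


open MeasureTheory intervalIntegral

/-- There is an absolute constant C > 0 such that for every sequence
(a_n) of nonnegative reals and every solution (u_n) of the triangular system
u_0(t) = a_0, u_n(t) = a_n + √n ∫_0^t u_{n-1}(s) ds, one has the explicit formula
u_n(t) = ∑_{k=0}^n (√(n!)/√((n-k)! k!)) (a_{n-k}/√(k!)) tᵏ, and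
∑_{n≥0} u_n(1)² ≥ C ∑_{n≥0} e^{√n} a_n² (stated in [0,∞] so both sides may be infinite). -/
theorem stmt13 :
    ∃ C : ℝ, 0 < C ∧
      ∀ (a : ℕ → ℝ) (u : ℕ → ℝ → ℝ),
        (∀ n, 0 ≤ a n) →
        (∀ t : ℝ, u 0 t = a 0) →
        (∀ n : ℕ, ∀ t : ℝ, u (n + 1) t =
          a (n + 1) + Real.sqrt (n + 1) * ∫ s in (0:ℝ)..t, u n s) →
        (∀ n : ℕ, ∀ t : ℝ, u n t =
          ∑ k ∈ Finset.range (n + 1),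
            (Real.sqrt n.factorial /
              Real.sqrt (((n - k).factorial : ℝ) * (k.factorial : ℝ))) *
              (a (n - k) / Real.sqrt k.factorial) * t ^ k) ∧
        ENNReal.ofReal C *
            (∑' n : ℕ, ENNReal.ofReal (Real.exp (Real.sqrt n) * (a n) ^ 2)) ≤
          ∑' n : ℕ, ENNReal.ofReal ((u n 1) ^ 2) := by
  refine ⟨1/2, by norm_num, ?_⟩
  intro a u ha h0 hrec
  have hform : ∀ (n : ℕ) (t : ℝ), u n t =
      ∑ k ∈ Finset.range (n + 1),
        (Real.sqrt n.factorial /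
          Real.sqrt (((n - k).factorial : ℝ) * (k.factorial : ℝ))) *
          (a (n - k) / Real.sqrt k.factorial) * t ^ k := by
    intro n
    induction n with
    | zero =>
      intro t
      rw [h0 t]
      simp [Nat.factorial]
    | succ n ih =>
      intro t
      have hs0 : Real.sqrt (((n + 1).factorial : ℝ)) ≠ 0 :=
        ne_of_gt (Real.sqrt_pos.mpr (by exact_mod_cast (n + 1).factorial_pos))
      have hint : (∫ s in (0:ℝ)..t, u n s) = ∑ k ∈ Finset.range (n + 1),
          Real.sqrt (n.factorial : ℝ) /
            Real.sqrt (((n - k).factorial : ℝ) * (k.factorial : ℝ)) *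
            (a (n - k) / Real.sqrt (k.factorial : ℝ)) * (t ^ (k + 1) / ((k : ℝ) + 1)) := by
        rw [intervalIntegral.integral_congr (g := fun s => ∑ k ∈ Finset.range (n + 1),
          Real.sqrt (n.factorial : ℝ) /
            Real.sqrt (((n - k).factorial : ℝ) * (k.factorial : ℝ)) *
            (a (n - k) / Real.sqrt (k.factorial : ℝ)) * s ^ k) (fun s _ => ih s)]
        rw [intervalIntegral.integral_finset_sum (fun k _ =>
          ((show Continuous fun s : ℝ =>
            Real.sqrt (n.factorial : ℝ) /
              Real.sqrt (((n - k).factorial : ℝ) * (k.factorial : ℝ)) *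
              (a (n - k) / Real.sqrt (k.factorial : ℝ)) * s ^ k from
            continuous_const.mul (continuous_pow k)).intervalIntegrable 0 t))]
        refine Finset.sum_congr rfl fun k _ => ?_
        rw [intervalIntegral.integral_const_mul, integral_pow]
        norm_num
      rw [hrec n t, hint, Finset.mul_sum]
      conv_rhs => rw [Finset.sum_range_succ']
      simp only [Nat.sub_zero, Nat.factorial_zero, Nat.cast_one, mul_one, Real.sqrt_one,
        div_one, pow_zero, div_self hs0, one_mul, Nat.add_sub_add_right]
      rw [add_comm]
      congr 1
      refine Finset.sum_congr rfl fun k hk => ?_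
      have hk' : k ≤ n := Nat.lt_succ_iff.mp (Finset.mem_range.mp hk)
      exact aux_coef n k ((n - k).factorial : ℝ) (a (n - k)) t
        (by exact_mod_cast (n - k).factorial_pos)
  refine ⟨hform, ?_⟩
  set g : ℕ → ℕ → ENNReal := fun m k =>
    ENNReal.ofReal ((((m + k).choose k : ℕ) : ℝ) / (k.factorial : ℝ)) *
      ENNReal.ofReal ((a m) ^ 2) with hg
  have hstep : ∀ n : ℕ, ∑ k ∈ Finset.range (n + 1), g (n - k) k
      ≤ ENNReal.ofReal ((u n 1) ^ 2) := by
    intro n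
    set b : ℕ → ℝ := fun k => Real.sqrt (n.factorial : ℝ) /
        Real.sqrt (((n - k).factorial : ℝ) * (k.factorial : ℝ)) *
        (a (n - k) / Real.sqrt (k.factorial : ℝ)) with hb
    have hu1 : u n 1 = ∑ k ∈ Finset.range (n + 1), b k := by
      rw [hform n 1]
      simp [hb]
    have hbnn : ∀ k ∈ Finset.range (n + 1), 0 ≤ b k := by
      intro k _
      simp only [hb]
      exact mul_nonneg (div_nonneg (Real.sqrt_nonneg _) (Real.sqrt_nonneg _))
        (div_nonneg (ha _) (Real.sqrt_nonneg _))
    have hsq : ∑ k ∈ Finset.range (n + 1), (b k) ^ 2 ≤ (u n 1) ^ 2 := by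
      rw [hu1]
      exact aux_sum_sq hbnn
    have hgb : ∀ k ∈ Finset.range (n + 1), g (n - k) k = ENNReal.ofReal ((b k) ^ 2) := by
      intro k hk
      have hk' : k ≤ n := Nat.lt_succ_iff.mp (Finset.mem_range.mp hk)
      have hnk : n - k + k = n := Nat.sub_add_cancel hk'
      have hb2 : (b k) ^ 2 = ((n.choose k : ℕ) : ℝ) / (k.factorial : ℝ) * (a (n - k)) ^ 2 := by
        simp only [hb]
        rw [Nat.cast_choose ℝ hk', mul_pow, div_pow, div_pow,
          Real.sq_sqrt (by positivity : (0:ℝ) ≤ (n.factorial : ℝ)),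
          Real.sq_sqrt (by positivity : (0:ℝ) ≤ ((n - k).factorial : ℝ) * (k.factorial : ℝ)),
          Real.sq_sqrt (by positivity : (0:ℝ) ≤ (k.factorial : ℝ))]
        ring
      simp only [hg, hnk]
      rw [← ENNReal.ofReal_mul (by positivity), hb2]
    calc ∑ k ∈ Finset.range (n + 1), g (n - k) k
        = ∑ k ∈ Finset.range (n + 1), ENNReal.ofReal ((b k) ^ 2) :=
          Finset.sum_congr rfl hgb
      _ = ENNReal.ofReal (∑ k ∈ Finset.range (n + 1), (b k) ^ 2) :=
          (ENNReal.ofReal_sum_of_nonneg (fun k _ => sq_nonneg _)).symm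
      _ ≤ ENNReal.ofReal ((u n 1) ^ 2) := ENNReal.ofReal_le_ofReal hsq
  have hperm : ∀ m : ℕ, ENNReal.ofReal (1/2 : ℝ) *
      ENNReal.ofReal (Real.exp (Real.sqrt m) * (a m) ^ 2) ≤ ∑' k : ℕ, g m k := by
    intro m
    have h1 : ∑' k : ℕ, g m k =
        (∑' k : ℕ, ENNReal.ofReal ((((m + k).choose k : ℕ) : ℝ) / (k.factorial : ℝ))) *
          ENNReal.ofReal ((a m) ^ 2) := ENNReal.tsum_mul_right
    rw [h1, ENNReal.ofReal_mul (Real.exp_nonneg _), ← mul_assoc]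
    refine mul_le_mul_left ?_ _
    rw [← ENNReal.ofReal_mul (by norm_num)]
    calc ENNReal.ofReal (1/2 * Real.exp (Real.sqrt m))
        = ENNReal.ofReal (Real.exp (Real.sqrt m) / 2) := by
          congr 1
          ring
      _ ≤ _ := aux_key m
  set G : ℕ → ℕ → ENNReal := fun n k => if k ≤ n then g (n - k) k else 0 with hG
  have hGsum : ∀ n : ℕ, ∑' k : ℕ, G n k = ∑ k ∈ Finset.range (n + 1), g (n - k) k := by
    intro n
    rw [tsum_eq_sum (s := Finset.range (n + 1))
      (fun k hk => if_neg (fun hle => hk (Finset.mem_range.mpr (Nat.lt_succ_of_le hle))))]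
    exact Finset.sum_congr rfl fun k hk =>
      if_pos (Nat.lt_succ_iff.mp (Finset.mem_range.mp hk))
  have hreindex : ∀ k : ℕ, ∑' n : ℕ, G n k = ∑' m : ℕ, g m k := by
    intro k
    have hinj : Function.Injective (fun m : ℕ => m + k) := fun x y h => by
      simpa using Nat.add_right_cancel h
    have hsupp : Function.support (fun n => G n k) ⊆ Set.range (fun m : ℕ => m + k) := by
      intro n hn
      have hkn : k ≤ n := by
        by_contra hkn
        exact hn (if_neg hkn)
      exact ⟨n - k, Nat.sub_add_cancel hkn⟩
    rw [← hinj.tsum_eq hsupp]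
    refine tsum_congr fun m => ?_
    simp only [hG]
    rw [if_pos (Nat.le_add_left k m), Nat.add_sub_cancel]
  calc ENNReal.ofReal (1/2 : ℝ) *
        ∑' n : ℕ, ENNReal.ofReal (Real.exp (Real.sqrt n) * (a n) ^ 2)
      = ∑' m : ℕ, ENNReal.ofReal (1/2 : ℝ) *
          ENNReal.ofReal (Real.exp (Real.sqrt m) * (a m) ^ 2) := ENNReal.tsum_mul_left.symm
    _ ≤ ∑' m : ℕ, ∑' k : ℕ, g m k :=
        Summable.tsum_le_tsum hperm ENNReal.summable ENNReal.summable
    _ = ∑' k : ℕ, ∑' m : ℕ, g m k := ENNReal.tsum_comm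
    _ = ∑' k : ℕ, ∑' n : ℕ, G n k := tsum_congr fun k => (hreindex k).symm
    _ = ∑' n : ℕ, ∑' k : ℕ, G n k := ENNReal.tsum_comm
    _ = ∑' n : ℕ, ∑ k ∈ Finset.range (n + 1), g (n - k) k := tsum_congr hGsum
    _ ≤ ∑' n : ℕ, ENNReal.ofReal ((u n 1) ^ 2) :=
        Summable.tsum_le_tsum hstep ENNReal.summable ENNReal.summable
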